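/- Every classical tripartite state is 1-bounded: if ρ_{ABC} is diagonal in a fixed product basis (i.e., a classical probability distribution p(a,b,c) with full support), then ‖Tr_C(ρ_{ABC} Ĥ_{A:C|B})‖₁ ≤ I(A:C|B). -/

import Mathlib

noncomputable section
open Matrix Finset
open scoped ComplexOrder

/-- Matrix logarithm via the spectral decomposition (junk value `0` for
non-Hermitian input). -/
def matLog {n : Type*} [Fintype n] [DecidableEq n] (ρ : Matrix n n ℂ) :
    Matrix n n ℂ :=
  if h : ρ.IsHermitian then
    (h.eigenvectorUnitary : Matrix n n ℂ) *
      Matrix.diagonal (fun i => (Real.log (h.eigenvalues i) : ℂ)) *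
      star (h.eigenvectorUnitary : Matrix n n ℂ)
  else 0

/-- von Neumann entropy `S(ρ) = -Tr(ρ log ρ)`. -/
def vnEntropy {n : Type*} [Fintype n] [DecidableEq n] (ρ : Matrix n n ℂ) : ℝ :=
  -((ρ * matLog ρ).trace.re)

/-- Trace norm `‖X‖₁ = Tr √(XᴴX)`. -/
def traceNorm {n : Type*} [Fintype n] [DecidableEq n] (X : Matrix n n ℂ) : ℝ :=
  (((Matrix.posSemidef_conjTranspose_mul_self X).1.eigenvectorUnitary : Matrix n n ℂ) *
    Matrix.diagonal (fun i => (Real.sqrt ((Matrix.posSemidef_conjTranspose_mul_self X).1.eigenvalues i) : ℂ)) *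
    star ((Matrix.posSemidef_conjTranspose_mul_self X).1.eigenvectorUnitary : Matrix n n ℂ)).trace.re

/-- Operator (spectral) norm of a matrix. -/
def opNorm {n : Type*} [Fintype n] [DecidableEq n] (X : Matrix n n ℂ) : ℝ :=
  ‖Matrix.toEuclideanCLM (𝕜 := ℂ) X‖

/-- A density matrix: positive semidefinite with unit trace. -/
def IsDensityMatrix {n : Type*} [Fintype n] [DecidableEq n]
    (ρ : Matrix n n ℂ) : Prop :=
  ρ.PosSemidef ∧ ρ.trace = 1

section Tripartite
variable {α β γ : Type*} [Fintype α] [Fintype β] [Fintype γ]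
  [DecidableEq α] [DecidableEq β] [DecidableEq γ]

/-- Partial trace over the third factor. -/
def trC (ρ : Matrix (α × β × γ) (α × β × γ) ℂ) : Matrix (α × β) (α × β) ℂ :=
  Matrix.of fun x y => ∑ c : γ, ρ (x.1, x.2, c) (y.1, y.2, c)

/-- Partial trace over the first factor. -/
def trA (ρ : Matrix (α × β × γ) (α × β × γ) ℂ) : Matrix (β × γ) (β × γ) ℂ :=
  Matrix.of fun x y => ∑ a : α, ρ (a, x.1, x.2) (a, y.1, y.2)

/-- Partial trace over the first and third factors. -/
def trAC (ρ : Matrix (α × β × γ) (α × β × γ) ℂ) : Matrix β β ℂ :=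
  Matrix.of fun x y => ∑ a : α, ∑ c : γ, ρ (a, x, c) (a, y, c)

/-- Extension of an operator on `A ⊗ B` by the identity on `C`. -/
def extAB (M : Matrix (α × β) (α × β) ℂ) :
    Matrix (α × β × γ) (α × β × γ) ℂ :=
  Matrix.of fun x y => M (x.1, x.2.1) (y.1, y.2.1) * (if x.2.2 = y.2.2 then 1 else 0)

/-- Extension of an operator on `B ⊗ C` by the identity on `A`. -/
def extBC (M : Matrix (β × γ) (β × γ) ℂ) :
    Matrix (α × β × γ) (α × β × γ) ℂ :=
  Matrix.of fun x y => (if x.1 = y.1 then 1 else 0) * M x.2 y.2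

/-- Extension of an operator on `B` by the identity on `A ⊗ C`. -/
def extB (M : Matrix β β ℂ) : Matrix (α × β × γ) (α × β × γ) ℂ :=
  Matrix.of fun x y =>
    (if x.1 = y.1 then 1 else 0) * M x.2.1 y.2.1 * (if x.2.2 = y.2.2 then 1 else 0)

/-- The conditional mutual spectrum
`Ĥ_{A:C|B} = Ĥ_AB + Ĥ_BC - Ĥ_B - Ĥ_ABC`, where `Ĥ_X = -(log ρ_X) ⊗ I`. -/
def condMutSpec (ρ : Matrix (α × β × γ) (α × β × γ) ℂ) :
    Matrix (α × β × γ) (α × β × γ) ℂ :=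
  -(extAB (matLog (trC ρ))) - extBC (matLog (trA ρ)) + extB (matLog (trAC ρ))
    + matLog ρ

/-- Conditional mutual information `I(A:C|B) = S_AB + S_BC - S_B - S_ABC`. -/
def condMutInfo (ρ : Matrix (α × β × γ) (α × β × γ) ℂ) : ℝ :=
  vnEntropy (trC ρ) + vnEntropy (trA ρ) - vnEntropy (trAC ρ) - vnEntropy ρ

end Tripartite

variable {α β γ : Type*} [Fintype α] [Fintype β] [Fintype γ]
  [DecidableEq α] [DecidableEq β] [DecidableEq γ]


section AuxLemmas

lemma matLog_diagonal' {n : Type*} [Fintype n] [DecidableEq n] (d : n → ℝ) :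
    matLog (Matrix.diagonal fun i => (d i : ℂ))
      = Matrix.diagonal fun i => (Real.log (d i) : ℂ) := by
  set A : Matrix n n ℂ := Matrix.diagonal fun i => (d i : ℂ) with hA
  have hH : A.IsHermitian := by
    rw [hA]
    exact Matrix.isHermitian_diagonal_iff.mpr fun i => by
      simp [_root_.IsSelfAdjoint, Complex.conj_ofReal]
  rw [matLog, dif_pos hH]
  set U : Matrix n n ℂ := (hH.eigenvectorUnitary : Matrix n n ℂ) with hU
  have hUU : U * star U = 1 := (Matrix.mem_unitaryGroup_iff).mp hH.eigenvectorUnitary.2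
  have hspec : A * U = U * Matrix.diagonal (RCLike.ofReal ∘ hH.eigenvalues) := by
    conv_lhs => rw [hH.spectral_theorem]
    rw [Unitary.conjStarAlgAut_apply, mul_assoc, mul_assoc, (Matrix.mem_unitaryGroup_iff').mp hH.eigenvectorUnitary.2, mul_one]
  have key : ∀ i k, (d i : ℂ) * U i k = U i k * (hH.eigenvalues k : ℂ) := by
    intro i k
    have := congrFun (congrFun hspec i) k
    simpa [hA, Matrix.diagonal_mul, Matrix.mul_diagonal] using this
  have key2 : ∀ i k, U i k * (Real.log (hH.eigenvalues k) : ℂ)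
      = (Real.log (d i) : ℂ) * U i k := by
    intro i k
    by_cases h : U i k = 0
    · simp [h]
    · have hd : d i = hH.eigenvalues k := by
        have := key i k
        rw [mul_comm (U i k)] at this
        have := mul_right_cancel₀ h this
        exact_mod_cast this
      rw [hd, mul_comm]
  ext i j
  rw [Matrix.mul_apply]
  simp only [Matrix.mul_apply]
  calc (∑ k, (∑ l, U i l * Matrix.diagonal (fun i => (Real.log (hH.eigenvalues i) : ℂ)) l k) * star U k j)
      = ∑ k, (U i k * (Real.log (hH.eigenvalues k) : ℂ)) * star U k j := by
        refine Finset.sum_congr rfl fun k _ => ?_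
        congr 1
        simp [Matrix.diagonal_apply, Finset.sum_ite_eq]
    _ = (Real.log (d i) : ℂ) * ∑ k, U i k * star U k j := by
        rw [Finset.mul_sum]
        refine Finset.sum_congr rfl fun k _ => ?_
        rw [key2, mul_assoc]
    _ = Matrix.diagonal (fun i => (Real.log (d i) : ℂ)) i j := by
        have := congrFun (congrFun hUU i) j
        rw [Matrix.mul_apply] at this
        simp only [Matrix.star_apply] at this ⊢
        rw [this]
        by_cases h : i = j <;> simp [Matrix.diagonal_apply, Matrix.one_apply, h]

lemma eigFun_diagonal' {n : Type*} [Fintype n] [DecidableEq n] (d : n → ℝ)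
    (A : Matrix n n ℂ) (hA : A = Matrix.diagonal fun i => (d i : ℂ)) (hH : A.IsHermitian)
    (f : ℝ → ℝ) :
    (hH.eigenvectorUnitary : Matrix n n ℂ) *
      Matrix.diagonal (fun i => (f (hH.eigenvalues i) : ℂ)) *
      star (hH.eigenvectorUnitary : Matrix n n ℂ)
      = Matrix.diagonal fun i => (f (d i) : ℂ) := by
  set U : Matrix n n ℂ := (hH.eigenvectorUnitary : Matrix n n ℂ) with hU
  have hUU : U * star U = 1 := (Matrix.mem_unitaryGroup_iff).mp hH.eigenvectorUnitary.2
  have hspec : A * U = U * Matrix.diagonal (RCLike.ofReal ∘ hH.eigenvalues) := by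
    conv_lhs => rw [hH.spectral_theorem]
    rw [Unitary.conjStarAlgAut_apply, mul_assoc, mul_assoc, (Matrix.mem_unitaryGroup_iff').mp hH.eigenvectorUnitary.2, mul_one]
  have key : ∀ i k, (d i : ℂ) * U i k = U i k * (hH.eigenvalues k : ℂ) := by
    intro i k
    have := congrFun (congrFun hspec i) k
    simpa [hA, Matrix.diagonal_mul, Matrix.mul_diagonal] using this
  have key2 : ∀ i k, U i k * (f (hH.eigenvalues k) : ℂ)
      = (f (d i) : ℂ) * U i k := by
    intro i k
    by_cases h : U i k = 0
    · simp [h]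
    · have hd : d i = hH.eigenvalues k := by
        have := key i k
        rw [mul_comm (U i k)] at this
        have := mul_right_cancel₀ h this
        exact_mod_cast this
      rw [hd, mul_comm]
  ext i j
  simp only [Matrix.mul_apply]
  calc (∑ k, (∑ l, U i l * Matrix.diagonal (fun i => (f (hH.eigenvalues i) : ℂ)) l k) * star U k j)
      = ∑ k, (U i k * (f (hH.eigenvalues k) : ℂ)) * star U k j := by
        refine Finset.sum_congr rfl fun k _ => ?_
        congr 1
        simp [Matrix.diagonal_apply, Finset.sum_ite_eq]
    _ = (f (d i) : ℂ) * ∑ k, U i k * star U k j := by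
        rw [Finset.mul_sum]
        refine Finset.sum_congr rfl fun k _ => ?_
        rw [key2, mul_assoc]
    _ = Matrix.diagonal (fun i => (f (d i) : ℂ)) i j := by
        have := congrFun (congrFun hUU i) j
        rw [Matrix.mul_apply] at this
        simp only [Matrix.star_apply] at this ⊢
        rw [this]
        by_cases h : i = j <;> simp [Matrix.diagonal_apply, Matrix.one_apply, h]

lemma traceNorm_diagonal_real' {n : Type*} [Fintype n] [DecidableEq n] (q : n → ℝ) :
    traceNorm (Matrix.diagonal fun i => (q i : ℂ)) = ∑ i, |q i| := by
  set X : Matrix n n ℂ := Matrix.diagonal fun i => (q i : ℂ) with hX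
  have hB : Matrix.PosSemidef (Matrix.diagonal fun i => ((|q i| : ℝ) : ℂ)) := by
    refine Matrix.posSemidef_diagonal_iff.mpr fun i => ?_
    rw [Complex.zero_le_real]
    exact abs_nonneg (q i)
  have hsq : (Matrix.diagonal fun i => ((|q i| : ℝ) : ℂ)) ^ 2 = Xᴴ * X := by
    rw [pow_two, Matrix.diagonal_mul_diagonal, hX, Matrix.diagonal_conjTranspose,
      Matrix.diagonal_mul_diagonal]
    congr 1
    funext i
    simp [← Complex.ofReal_mul, abs_mul_abs_self, Pi.star_apply, Complex.conj_ofReal]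
  have hXX : Xᴴ * X = Matrix.diagonal fun i => ((q i ^ 2 : ℝ) : ℂ) := by
    rw [hX, Matrix.diagonal_conjTranspose, Matrix.diagonal_mul_diagonal]
    congr 1
    funext i
    simp [Complex.conj_ofReal, pow_two]
  have := eigFun_diagonal' (fun i => q i ^ 2) (Xᴴ * X) hXX
    (Matrix.posSemidef_conjTranspose_mul_self X).1 Real.sqrt
  rw [traceNorm, this, Matrix.trace_diagonal]
  simp [Real.sqrt_sq_eq_abs]

lemma vnEntropy_diagonal_real' {n : Type*} [Fintype n] [DecidableEq n] (d : n → ℝ) :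
    vnEntropy (Matrix.diagonal fun i => (d i : ℂ)) = -∑ i, d i * Real.log (d i) := by
  rw [vnEntropy, matLog_diagonal', Matrix.diagonal_mul_diagonal, Matrix.trace_diagonal]
  simp

section TripartiteAux
variable {α β γ : Type*} [Fintype α] [Fintype β] [Fintype γ]
  [DecidableEq α] [DecidableEq β] [DecidableEq γ]

lemma trC_diagonal' (f : α × β × γ → ℂ) :
    trC (Matrix.diagonal f) = Matrix.diagonal (fun x => ∑ c : γ, f (x.1, x.2, c)) := by
  ext x y
  simp only [trC, Matrix.of_apply, Matrix.diagonal_apply, Prod.mk.injEq]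
  by_cases h : x = y
  · subst h; simp
  · rw [if_neg h]
    refine Finset.sum_eq_zero fun c _ => ?_
    rw [if_neg]
    intro hc
    exact h (Prod.ext hc.1 hc.2.1)

lemma trA_diagonal' (f : α × β × γ → ℂ) :
    trA (Matrix.diagonal f) = Matrix.diagonal (fun x => ∑ a : α, f (a, x.1, x.2)) := by
  ext x y
  simp only [trA, Matrix.of_apply, Matrix.diagonal_apply, Prod.mk.injEq]
  by_cases h : x = y
  · subst h; simp
  · rw [if_neg h]
    refine Finset.sum_eq_zero fun a _ => ?_
    rw [if_neg]
    intro hc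
    exact h (Prod.ext hc.2.1 hc.2.2)

lemma trAC_diagonal' (f : α × β × γ → ℂ) :
    trAC (Matrix.diagonal f) = Matrix.diagonal (fun b => ∑ a : α, ∑ c : γ, f (a, b, c)) := by
  ext x y
  simp only [trAC, Matrix.of_apply, Matrix.diagonal_apply, Prod.mk.injEq]
  by_cases h : x = y
  · subst h; simp
  · rw [if_neg h]
    refine Finset.sum_eq_zero fun a _ => Finset.sum_eq_zero fun c _ => ?_
    rw [if_neg]
    intro hc
    exact h hc.2.1

lemma extAB_diagonal' (f : α × β → ℂ) :
    extAB (γ := γ) (Matrix.diagonal f)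
      = Matrix.diagonal (fun x : α × β × γ => f (x.1, x.2.1)) := by
  ext x y
  simp only [extAB, Matrix.of_apply, Matrix.diagonal_apply, Prod.mk.injEq]
  by_cases h : x = y
  · subst h; simp
  · have h' : ¬(x.1 = y.1 ∧ x.2.1 = y.2.1 ∧ x.2.2 = y.2.2) := by
      rintro ⟨h1, h2, h3⟩; exact h (Prod.ext h1 (Prod.ext h2 h3))
    simp only [h, if_false]
    by_cases h1 : x.1 = y.1 ∧ x.2.1 = y.2.1
    · have h3 : ¬ x.2.2 = y.2.2 := fun hc => h' ⟨h1.1, h1.2, hc⟩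
      simp [h3]
    · simp [h1]

lemma extBC_diagonal' (f : β × γ → ℂ) :
    extBC (α := α) (Matrix.diagonal f)
      = Matrix.diagonal (fun x : α × β × γ => f x.2) := by
  ext x y
  simp only [extBC, Matrix.of_apply, Matrix.diagonal_apply, Prod.mk.injEq]
  by_cases h : x = y
  · subst h; simp
  · simp only [h, if_false]
    by_cases h1 : x.1 = y.1
    · have h2 : ¬ x.2 = y.2 := fun hc => h (Prod.ext h1 hc)
      simp [h2]
    · simp [h1]

lemma extB_diagonal' (f : β → ℂ) :
    extB (α := α) (γ := γ) (Matrix.diagonal f)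
      = Matrix.diagonal (fun x : α × β × γ => f x.2.1) := by
  ext x y
  simp only [extB, Matrix.of_apply, Matrix.diagonal_apply, Prod.mk.injEq]
  by_cases h : x = y
  · subst h; simp
  · have h' : ¬(x.1 = y.1 ∧ x.2.1 = y.2.1 ∧ x.2.2 = y.2.2) := by
      rintro ⟨h1, h2, h3⟩; exact h (Prod.ext h1 (Prod.ext h2 h3))
    simp only [h, if_false]
    by_cases h1 : x.1 = y.1
    · by_cases h2 : x.2.1 = y.2.1
      · have h3 : ¬ x.2.2 = y.2.2 := fun hc => h' ⟨h1, h2, hc⟩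
        simp [h3]
      · simp [h2]
    · simp [h1]

end TripartiteAux
end AuxLemmas

/-- every classical (diagonal, fully supported) tripartite state
is `1`-bounded. -/
theorem classical_state_one_bounded
    (p : α × β × γ → ℝ) (hpos : ∀ x, 0 < p x) (hsum : ∑ x : α × β × γ, p x = 1)
    (ρ : Matrix (α × β × γ) (α × β × γ) ℂ)
    (hρ : ρ = Matrix.diagonal (fun x => (p x : ℂ))) :
    traceNorm (trC (ρ * condMutSpec ρ)) ≤ condMutInfo ρ := by
  subst hρ
  -- nonemptiness of the index types
  have hne : Nonempty (α × β × γ) := by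
    by_contra hne
    rw [not_nonempty_iff] at hne
    rw [Finset.univ_eq_empty, Finset.sum_empty] at hsum
    exact one_ne_zero hsum.symm
  obtain ⟨⟨a0, b0, c0⟩⟩ := hne
  haveI hNA : Nonempty α := ⟨a0⟩
  haveI hNB : Nonempty β := ⟨b0⟩
  haveI hNC : Nonempty γ := ⟨c0⟩
  set pAB : α × β → ℝ := fun x => ∑ c : γ, p (x.1, x.2, c) with hpAB_def
  set pBC : β × γ → ℝ := fun x => ∑ a : α, p (a, x.1, x.2) with hpBC_def
  set pB : β → ℝ := fun b => ∑ a : α, ∑ c : γ, p (a, b, c) with hpB_def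
  have hpABpos : ∀ x, 0 < pAB x := fun x =>
    Finset.sum_pos (fun c _ => hpos _) Finset.univ_nonempty
  have hpBCpos : ∀ x, 0 < pBC x := fun x =>
    Finset.sum_pos (fun a _ => hpos _) Finset.univ_nonempty
  have hpBpos : ∀ b, 0 < pB b := fun b =>
    Finset.sum_pos (fun a _ => Finset.sum_pos (fun c _ => hpos _) Finset.univ_nonempty)
      Finset.univ_nonempty
  -- the diagonal marginals
  have htrC : trC (Matrix.diagonal fun x => (p x : ℂ))
      = Matrix.diagonal (fun x => (pAB x : ℂ)) := by
    rw [trC_diagonal']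
    congr 1
    funext x
    rw [hpAB_def]
    push_cast
    rfl
  have htrA : trA (Matrix.diagonal fun x => (p x : ℂ))
      = Matrix.diagonal (fun x => (pBC x : ℂ)) := by
    rw [trA_diagonal']
    congr 1
    funext x
    rw [hpBC_def]
    push_cast
    rfl
  have htrAC : trAC (Matrix.diagonal fun x => (p x : ℂ))
      = Matrix.diagonal (fun b => (pB b : ℂ)) := by
    rw [trAC_diagonal']
    congr 1
    funext b
    rw [hpB_def]
    push_cast
    rfl
  set hfun : α × β × γ → ℝ := fun x =>
    -Real.log (pAB (x.1, x.2.1)) - Real.log (pBC x.2) + Real.log (pB x.2.1) + Real.log (p x)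
    with hh_def
  -- the conditional mutual spectrum is diagonal
  have hspec : condMutSpec (Matrix.diagonal fun x => (p x : ℂ))
      = Matrix.diagonal (fun x => (hfun x : ℂ)) := by
    rw [condMutSpec, htrC, htrA, htrAC, matLog_diagonal', matLog_diagonal', matLog_diagonal',
      matLog_diagonal', extAB_diagonal', extBC_diagonal', extB_diagonal']
    ext x y
    by_cases h : x = y
    · subst h
      simp only [Matrix.sub_apply, Matrix.add_apply, Matrix.neg_apply,
        Matrix.diagonal_apply_eq, hh_def]
      push_cast
      ring
    · simp [Matrix.sub_apply, Matrix.add_apply, Matrix.neg_apply,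
        Matrix.diagonal_apply_ne _ h]
  -- the product and its partial trace
  have hprod : (Matrix.diagonal fun x => (p x : ℂ))
        * condMutSpec (Matrix.diagonal fun x => (p x : ℂ))
      = Matrix.diagonal (fun x => ((p x * hfun x : ℝ) : ℂ)) := by
    rw [hspec, Matrix.diagonal_mul_diagonal]
    congr 1
    funext x
    push_cast
    ring
  have htrCprod : trC ((Matrix.diagonal fun x => (p x : ℂ))
        * condMutSpec (Matrix.diagonal fun x => (p x : ℂ)))
      = Matrix.diagonal
          (fun x : α × β => ((∑ c : γ, p (x.1, x.2, c) * hfun (x.1, x.2, c) : ℝ) : ℂ)) := by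
    rw [hprod, trC_diagonal']
    congr 1
    funext x
    push_cast
    rfl
  -- compute the conditional mutual information as a single sum
  have hCMI : condMutInfo (Matrix.diagonal fun x => (p x : ℂ))
      = ∑ x : α × β, ∑ c : γ, p (x.1, x.2, c) * hfun (x.1, x.2, c) := by
    rw [condMutInfo, htrC, htrA, htrAC, vnEntropy_diagonal_real', vnEntropy_diagonal_real',
      vnEntropy_diagonal_real', vnEntropy_diagonal_real']
    have e1 : ∑ x : α × β, pAB x * Real.log (pAB x)
        = ∑ x : α × β, ∑ c : γ, p (x.1, x.2, c) * Real.log (pAB x) := by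
      refine Finset.sum_congr rfl fun x _ => ?_
      have hx : pAB x = ∑ c : γ, p (x.1, x.2, c) := rfl
      nth_rewrite 1 [hx]
      rw [Finset.sum_mul]
    have e2 : ∑ x : β × γ, pBC x * Real.log (pBC x)
        = ∑ x : α × β, ∑ c : γ, p (x.1, x.2, c) * Real.log (pBC (x.2, c)) := by
      rw [Fintype.sum_prod_type]
      conv_rhs => rw [Fintype.sum_prod_type]
      have step1 : ∀ b : β, ∑ c : γ, pBC (b, c) * Real.log (pBC (b, c))
          = ∑ c : γ, ∑ a : α, p (a, b, c) * Real.log (pBC (b, c)) := by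
        intro b
        refine Finset.sum_congr rfl fun c _ => ?_
        have hx : pBC (b, c) = ∑ a : α, p (a, b, c) := rfl
        nth_rewrite 1 [hx]
        rw [Finset.sum_mul]
      rw [Finset.sum_congr rfl fun b _ => step1 b]
      rw [Finset.sum_congr rfl fun b _ => Finset.sum_comm]
      rw [Finset.sum_comm]
    have e3 : ∑ b : β, pB b * Real.log (pB b)
        = ∑ x : α × β, ∑ c : γ, p (x.1, x.2, c) * Real.log (pB x.2) := by
      conv_rhs => rw [Fintype.sum_prod_type]
      rw [Finset.sum_comm]
      refine Finset.sum_congr rfl fun b _ => ?_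
      have hx : pB b = ∑ a : α, ∑ c : γ, p (a, b, c) := rfl
      nth_rewrite 1 [hx]
      rw [Finset.sum_mul]
      refine Finset.sum_congr rfl fun a _ => ?_
      rw [Finset.sum_mul]
    have e4 : ∑ x : α × β × γ, p x * Real.log (p x)
        = ∑ x : α × β, ∑ c : γ, p (x.1, x.2, c) * Real.log (p (x.1, x.2, c)) := by
      rw [Fintype.sum_prod_type]
      conv_rhs => rw [Fintype.sum_prod_type]
      refine Finset.sum_congr rfl fun a _ => ?_
      rw [Fintype.sum_prod_type]
    rw [e1, e2, e3, e4]
    simp only [hh_def, mul_add, mul_sub, mul_neg, Finset.sum_add_distrib,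
      Finset.sum_sub_distrib, Finset.sum_neg_distrib, Prod.mk.eta]
    ring
  -- nonnegativity of each partial sum (Gibbs' inequality)
  have hg : ∀ x : α × β, 0 ≤ ∑ c : γ, p (x.1, x.2, c) * hfun (x.1, x.2, c) := by
    rintro ⟨a, b⟩
    have hsplit : ∀ c : γ, p (a, b, c) * hfun (a, b, c)
        = -(p (a, b, c) * Real.log (pAB (a, b) * pBC (b, c) / (pB b * p (a, b, c)))) := by
      intro c
      have h1 := (hpABpos (a, b)).ne'
      have h2 := (hpBCpos (b, c)).ne'
      have h3 := (hpBpos b).ne'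
      have h4 := (hpos (a, b, c)).ne'
      rw [Real.log_div (by positivity) (by positivity), Real.log_mul h1 h2,
        Real.log_mul h3 h4, hh_def]
      ring
    have hkey : ∑ c : γ, p (a, b, c)
        * Real.log (pAB (a, b) * pBC (b, c) / (pB b * p (a, b, c))) ≤ 0 := by
      have hbound : ∀ c ∈ Finset.univ, p (a, b, c)
          * Real.log (pAB (a, b) * pBC (b, c) / (pB b * p (a, b, c)))
          ≤ pAB (a, b) * pBC (b, c) / pB b - p (a, b, c) := by
        intro c _
        have hp := hpos (a, b, c)
        have hAB := hpABpos (a, b)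
        have hBCp := hpBCpos (b, c)
        have hBp := hpBpos b
        have ht : 0 < pAB (a, b) * pBC (b, c) / (pB b * p (a, b, c)) := by positivity
        have hlog := Real.log_le_sub_one_of_pos ht
        calc p (a, b, c) * Real.log (pAB (a, b) * pBC (b, c) / (pB b * p (a, b, c)))
            ≤ p (a, b, c) * (pAB (a, b) * pBC (b, c) / (pB b * p (a, b, c)) - 1) :=
              mul_le_mul_of_nonneg_left hlog hp.le
          _ = pAB (a, b) * pBC (b, c) / pB b - p (a, b, c) := by
              field_simp
      calc ∑ c : γ, p (a, b, c)
            * Real.log (pAB (a, b) * pBC (b, c) / (pB b * p (a, b, c)))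
          ≤ ∑ c : γ, (pAB (a, b) * pBC (b, c) / pB b - p (a, b, c)) :=
            Finset.sum_le_sum hbound
        _ = (pAB (a, b) / pB b) * (∑ c : γ, pBC (b, c)) - pAB (a, b) := by
            rw [Finset.sum_sub_distrib, Finset.mul_sum]
            congr 1
            · exact Finset.sum_congr rfl fun c _ => by ring
        _ = 0 := by
            have hBsum : ∑ c : γ, pBC (b, c) = pB b := by
              rw [hpBC_def, hpB_def]
              exact Finset.sum_comm
            rw [hBsum, div_mul_cancel₀ _ (hpBpos b).ne', sub_self]
    calc (0 : ℝ) = -(0 : ℝ) := by ring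
      _ ≤ -∑ c : γ, p (a, b, c)
            * Real.log (pAB (a, b) * pBC (b, c) / (pB b * p (a, b, c))) := by linarith
      _ = ∑ c : γ, p (a, b, c) * hfun (a, b, c) := by
          rw [← Finset.sum_neg_distrib]
          exact Finset.sum_congr rfl fun c _ => (hsplit c).symm
  -- conclusion
  rw [htrCprod, traceNorm_diagonal_real', hCMI]
  exact le_of_eq (Finset.sum_congr rfl fun x _ => abs_of_nonneg (hg x))


end
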